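/- Let d ≥ 2 and let M and A be d×d complex matrices. Let v be a unit vector with Mv = λv for some λ ∈ ℂ, and let v' be a nonzero vector with (M+A)v' = λ'v' for some λ' ∈ ℂ. If the second smallest singular value s := ς_{−2}(M − λI) (singular values counted with multiplicity) is positive, then there exists c ∈ ℂ such that w := c·v' is a unit vector and ‖w − v‖ ≤ 2√2·(‖A‖ + |λ' − λ|)/s. -/

import Mathlib

open scoped ComplexOrder Matrix

namespace Stmt17

/-- The space of `d × d` complex matrices. -/
abbrev Mat (d : ℕ) := Matrix (Fin d) (Fin d) ℂ

/-- Operator (spectral) norm of a complex matrix. -/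
noncomputable def opNorm {m n : Type*} [Fintype m] [Fintype n] [DecidableEq n]
    (A : Matrix m n ℂ) : ℝ :=
  ‖LinearMap.toContinuousLinearMap (Matrix.toEuclideanLin A)‖

/-- The singular values of a matrix: square roots of the eigenvalues of `B†B`
(counted with multiplicity). -/
noncomputable def singVals {n : Type*} [Fintype n] [DecidableEq n] (B : Matrix n n ℂ) :
    n → ℝ :=
  fun i => Real.sqrt ((Matrix.isHermitian_conjTranspose_mul_self B).eigenvalues i)

/-- The second smallest value (with multiplicity) of a real family. -/
noncomputable def secondSmallest {ι : Type*} (f : ι → ℝ) : ℝ :=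
  sInf {x | ∃ i j, i ≠ j ∧ x = max (f i) (f j)}

/-- Euclidean norm of a complex vector. -/
noncomputable def vecNorm {n : Type*} [Fintype n] (v : n → ℂ) : ℝ :=
  Real.sqrt (∑ i, ‖v i‖ ^ 2)

noncomputable def toE {n : Type*} [Fintype n] (x : n → ℂ) : EuclideanSpace ℂ n :=
  (WithLp.equiv 2 _).symm x

section quad
variable {d : ℕ} (B : Matrix (Fin d) (Fin d) ℂ)

local notation "hH" => Matrix.isHermitian_conjTranspose_mul_self B
local notation "μ" => Matrix.IsHermitian.eigenvalues hH
local notation "b" => Matrix.IsHermitian.eigenvectorBasis hH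

lemma re_conj_mul (r : ℝ) (z : ℂ) : ((starRingEnd ℂ) z * (↑r * z)).re = r * ‖z‖ ^ 2 := by
  have : (starRingEnd ℂ) z * (↑r * z) = ↑r * (z * (starRingEnd ℂ) z) := by ring
  rw [this, Complex.mul_conj, ← Complex.ofReal_mul, Complex.ofReal_re,
    Complex.normSq_eq_norm_sq]

lemma quad (x : Fin d → ℂ) :
    ‖toE (B.mulVec x)‖ ^ 2 =
      ∑ i, μ i * ‖(Matrix.IsHermitian.eigenvectorBasis hH).repr (toE x) i‖ ^ 2 := by
  set c : Fin d → ℂ := fun i => (Matrix.IsHermitian.eigenvectorBasis hH).repr (toE x) i with hc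
  have hx : toE x = ∑ i, c i • b i :=
    ((Matrix.IsHermitian.eigenvectorBasis hH).sum_repr (toE x)).symm
  have h2 : (inner ℂ (toE (B.mulVec x)) (toE (B.mulVec x)) : ℂ)
      = inner ℂ (toE x) (toE ((Bᴴ * B).mulVec x)) := by
    show dotProduct (B.mulVec x) (star (B.mulVec x))
      = dotProduct ((Bᴴ * B).mulVec x) (star x)
    rw [dotProduct_comm, dotProduct_comm _ (star x)]
    rw [← Matrix.mulVec_mulVec, Matrix.dotProduct_mulVec (star x) Bᴴ, ← Matrix.star_mulVec]
  have hT : toE ((Bᴴ * B).mulVec x) = ∑ i, (↑(μ i) * c i) • b i := by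
    have : toE ((Bᴴ * B).mulVec x) = Matrix.toEuclideanLin (Bᴴ * B) (toE x) := rfl
    rw [this, hx, map_sum]
    refine Finset.sum_congr rfl fun i _ => ?_
    rw [map_smul]
    have hTb : Matrix.toEuclideanLin (Bᴴ * B) (b i) = (↑(μ i) : ℂ) • b i := by
      have h := Matrix.IsHermitian.mulVec_eigenvectorBasis hH i
      have h2 : toE ((Bᴴ * B).mulVec (WithLp.equiv 2 _ (b i))) = toE (μ i • (WithLp.equiv 2 _ (b i))) := congrArg toE h
      refine h2.trans ?_
      show μ i • (b i) = (↑(μ i) : ℂ) • b i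
      rw [RCLike.real_smul_eq_coe_smul (K := ℂ)]; rfl
    rw [hTb, smul_smul, mul_comm]
  have h3 : (inner ℂ (toE x) (toE ((Bᴴ * B).mulVec x)) : ℂ)
      = ∑ i, (starRingEnd ℂ) (c i) * (↑(μ i) * c i) := by
    rw [hT]
    nth_rewrite 1 [hx]
    exact (Matrix.IsHermitian.eigenvectorBasis hH).orthonormal.inner_sum _ _ _
  have h1 : (‖toE (B.mulVec x)‖ : ℝ) ^ 2
      = Complex.re (inner ℂ (toE (B.mulVec x)) (toE (B.mulVec x))) := by
    exact (inner_self_eq_norm_sq (𝕜 := ℂ) _).symm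
  rw [h1, h2, h3, Complex.re_sum]
  exact Finset.sum_congr rfl fun i _ => re_conj_mul _ _

end quad

lemma normsq_repr {d : ℕ} (b : OrthonormalBasis (Fin d) ℂ (EuclideanSpace ℂ (Fin d)))
    (x : EuclideanSpace ℂ (Fin d)) : ‖x‖ ^ 2 = ∑ i, ‖b.repr x i‖ ^ 2 := by
  rw [← b.repr.norm_map x, EuclideanSpace.norm_eq, Real.sq_sqrt (by positivity)]

lemma inner_repr {d : ℕ} (b : OrthonormalBasis (Fin d) ℂ (EuclideanSpace ℂ (Fin d)))
    (x y : EuclideanSpace ℂ (Fin d)) :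
    (inner ℂ x y : ℂ) = ∑ i, (starRingEnd ℂ) (b.repr x i) * b.repr y i := by
  rw [← b.repr.inner_map_map x y, PiLp.inner_apply]
  exact Finset.sum_congr rfl fun i _ => mul_comm _ _

section key
variable {d : ℕ} (B : Matrix (Fin d) (Fin d) ℂ)
local notation "μ" => Matrix.IsHermitian.eigenvalues (Matrix.isHermitian_conjTranspose_mul_self B)
local notation "bb" => Matrix.IsHermitian.eigenvectorBasis (Matrix.isHermitian_conjTranspose_mul_self B)

lemma key (v u : Fin d → ℂ)
    (hs : 0 < secondSmallest (singVals B))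
    (hvB : B.mulVec v = 0) (hv1 : ‖toE v‖ = 1)
    (hvu : (inner ℂ (toE v) (toE u) : ℂ) = 0) :
    secondSmallest (singVals B) * ‖toE u‖ ≤ ‖toE (B.mulVec u)‖ := by
  set s := secondSmallest (singVals B) with hsdef
  have hμ0 : ∀ i, 0 ≤ μ i := Matrix.eigenvalues_conjTranspose_mul_self_nonneg B
  have hσ0 : ∀ i, 0 ≤ singVals B i := fun i => Real.sqrt_nonneg _
  have hμσ : ∀ i, μ i = singVals B i ^ 2 := fun i => (Real.sq_sqrt (hμ0 i)).symm
  have hbdd : BddBelow {x | ∃ i j, i ≠ j ∧ x = max (singVals B i) (singVals B j)} :=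
    ⟨0, by rintro x ⟨i, j, -, rfl⟩; exact le_max_of_le_left (hσ0 i)⟩
  have hF2 : ∀ i j, i ≠ j → s ≤ max (singVals B i) (singVals B j) :=
    fun i j h => csInf_le hbdd ⟨i, j, h, rfl⟩
  have hqv := quad B v
  rw [hvB] at hqv
  have h0 : ∑ i, μ i * ‖(bb).repr (toE v) i‖ ^ 2 = 0 := by
    rw [← hqv]
    have : toE (0 : Fin d → ℂ) = 0 := rfl
    rw [this]; simp
  have hterm : ∀ i ∈ Finset.univ, μ i * ‖(bb).repr (toE v) i‖ ^ 2 = 0 :=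
    (Finset.sum_eq_zero_iff_of_nonneg (fun i _ => mul_nonneg (hμ0 i) (by positivity))).1 h0
  have hnv : ∑ i, ‖(bb).repr (toE v) i‖ ^ 2 = 1 := by
    have := normsq_repr (bb) (toE v)
    rw [hv1] at this; simpa using this.symm
  have hex : ∃ i₀, (bb).repr (toE v) i₀ ≠ 0 := by
    by_contra h
    push_neg at h
    rw [Finset.sum_eq_zero (fun i _ => by rw [h i]; simp)] at hnv
    norm_num at hnv
  obtain ⟨i₀, hi₀⟩ := hex
  have hμzero : ∀ j, (bb).repr (toE v) j ≠ 0 → μ j = 0 := by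
    intro j hj
    have := hterm j (Finset.mem_univ _)
    rcases mul_eq_zero.1 this with h | h
    · exact h
    · exact absurd (pow_eq_zero_iff (by norm_num) |>.1 h) (norm_ne_zero_iff.2 hj)
  have hσzero : ∀ j, (bb).repr (toE v) j ≠ 0 → singVals B j = 0 := by
    intro j hj
    show Real.sqrt (μ j) = 0
    rw [hμzero j hj, Real.sqrt_zero]
  have hsj : ∀ j, j ≠ i₀ → s ≤ singVals B j := by
    intro j hj
    have := hF2 j i₀ hj
    rwa [hσzero i₀ hi₀, max_eq_left (hσ0 j)] at this
  have hcvj : ∀ j, j ≠ i₀ → (bb).repr (toE v) j = 0 := by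
    intro j hj
    by_contra h
    have := hsj j hj
    rw [hσzero j h] at this
    linarith
  have hcui₀ : (bb).repr (toE u) i₀ = 0 := by
    have hinner := inner_repr (bb) (toE v) (toE u)
    rw [hvu] at hinner
    rw [Finset.sum_eq_single i₀ (fun j _ hj => by rw [hcvj j hj]; simp)
      (fun h => absurd (Finset.mem_univ _) h)] at hinner
    rcases mul_eq_zero.1 hinner.symm with h | h
    · exact absurd (by simpa using h) hi₀
    · exact h
  have hquadu := quad B u
  have hle : (s * ‖toE u‖) ^ 2 ≤ ‖toE (B.mulVec u)‖ ^ 2 := by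
    rw [hquadu, mul_pow, normsq_repr (bb) (toE u), Finset.mul_sum]
    refine Finset.sum_le_sum fun i _ => ?_
    by_cases hi : i = i₀
    · subst hi; rw [hcui₀]; simp
    · have h1 : s ^ 2 ≤ μ i := by
        rw [hμσ i]
        exact pow_le_pow_left₀ hs.le (hsj i hi) 2
      exact mul_le_mul_of_nonneg_right h1 (by positivity)
  have h1 : 0 ≤ s * ‖toE u‖ := mul_nonneg hs.le (norm_nonneg _)
  nlinarith [norm_nonneg (toE (B.mulVec u))]
end key


lemma vecNorm_toE {n : Type*} [Fintype n] (x : n → ℂ) : vecNorm x = ‖toE x‖ := by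
  rw [EuclideanSpace.norm_eq]; rfl

lemma opNorm_bound {n : Type*} [Fintype n] [DecidableEq n] (A : Matrix n n ℂ) (x : n → ℂ) :
    ‖toE (A.mulVec x)‖ ≤ opNorm A * ‖toE x‖ := by
  have h := (LinearMap.toContinuousLinearMap (Matrix.toEuclideanLin A)).le_opNorm (toE x)
  have h2 : (LinearMap.toContinuousLinearMap (Matrix.toEuclideanLin A)) (toE x)
      = toE (A.mulVec x) := rfl
  rw [h2] at h
  exact h

lemma le_of_sq {a b : ℝ} (ha : 0 ≤ a) (hb : 0 ≤ b) (h : a ^ 2 ≤ b ^ 2) : a ≤ b := by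
  nlinarith

set_option maxHeartbeats 2000000 in
/-- Eigenvector perturbation: if `Mv = λv` with `v` a unit vector and
`(M+A)v' = λ'v'`, then `v'` can be normalized to a unit vector `w = c·v'` with
`‖w - v‖ ≤ 2√2·(‖A‖ + |λ'-λ|)/ς₋₂(M - λI)`. -/
theorem stmt17 (d : ℕ) (hd : 2 ≤ d) (M A : Mat d) (lam lam' : ℂ)
    (v : Fin d → ℂ) (hv : vecNorm v = 1) (hMv : M.mulVec v = lam • v)
    (v' : Fin d → ℂ) (hv' : v' ≠ 0) (hMv' : (M + A).mulVec v' = lam' • v')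
    (hs : 0 < secondSmallest (singVals (M - lam • (1 : Mat d)))) :
    ∃ c : ℂ, vecNorm (c • v') = 1 ∧
      vecNorm (c • v' - v) ≤
        2 * Real.sqrt 2 * (opNorm A + ‖lam' - lam‖) /
          secondSmallest (singVals (M - lam • (1 : Mat d))) := by
  set B : Mat d := M - lam • (1 : Mat d) with hBdef
  set s := secondSmallest (singVals B) with hsdef
  set K : ℝ := opNorm A + ‖lam' - lam‖ with hKdef
  have hK0 : 0 ≤ K := add_nonneg (norm_nonneg _) (norm_nonneg _)
  have hv1 : ‖toE v‖ = 1 := by rw [← vecNorm_toE]; exact hv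
  have hn : 0 < ‖toE v'‖ := by
    rw [norm_pos_iff]
    intro h
    exact hv' ((WithLp.equiv 2 (Fin d → ℂ)).symm.injective (h.trans rfl))
  set n : ℝ := ‖toE v'‖ with hndef
  have hBv : B.mulVec v = 0 := by
    rw [hBdef, Matrix.sub_mulVec, hMv, Matrix.smul_mulVec, Matrix.one_mulVec, sub_self]
  have hBv' : B.mulVec v' = (lam' - lam) • v' - A.mulVec v' := by
    have h1 : M.mulVec v' + A.mulVec v' = lam' • v' := by rw [← Matrix.add_mulVec]; exact hMv'
    rw [hBdef, Matrix.sub_mulVec, Matrix.smul_mulVec, Matrix.one_mulVec, sub_smul]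
    rw [eq_sub_of_add_eq h1]
    module
  have hnB : ‖toE (B.mulVec v')‖ ≤ K * n := by
    rw [hBv']
    have h2 : toE ((lam' - lam) • v' - A.mulVec v')
        = (lam' - lam) • toE v' - toE (A.mulVec v') := rfl
    rw [h2]
    calc ‖(lam' - lam) • toE v' - toE (A.mulVec v')‖
        ≤ ‖(lam' - lam) • toE v'‖ + ‖toE (A.mulVec v')‖ := norm_sub_le _ _
      _ ≤ ‖lam' - lam‖ * n + opNorm A * n := by
          gcongr
          · rw [norm_smul]
          · exact opNorm_bound A v'
      _ = K * n := by rw [hKdef]; ring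
  set α : ℂ := (inner ℂ (toE v) (toE v') : ℂ) with hαdef
  set u : EuclideanSpace ℂ (Fin d) := toE v' - α • toE v with hudef
  have hvu : (inner ℂ (toE v) u : ℂ) = 0 := by
    rw [hudef, inner_sub_right, inner_smul_right, inner_self_eq_norm_sq_to_K, hv1, ← hαdef]
    norm_num
  have hueq : toE (v' - α • v) = u := rfl
  have hBu : B.mulVec (v' - α • v) = B.mulVec v' := by
    rw [Matrix.mulVec_sub, Matrix.mulVec_smul, hBv, smul_zero, sub_zero]
  have hkey : s * ‖u‖ ≤ K * n := by
    have h := key B v (v' - α • v) hs hBv hv1 (by rw [hueq]; exact hvu)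
    rw [hueq, hBu] at h
    exact h.trans hnB
  set a : ℝ := ‖α‖ with hadef
  set m : ℝ := ‖u‖ with hmdef
  have ha0 : 0 ≤ a := norm_nonneg _
  have hm0 : 0 ≤ m := norm_nonneg _
  have hdecomp : toE v' = α • toE v + u := by rw [hudef]; abel
  have hpyth : n ^ 2 = a ^ 2 + m ^ 2 := by
    rw [hndef, hdecomp, norm_add_sq (𝕜 := ℂ)]
    rw [inner_smul_left, hvu, mul_zero]
    rw [norm_smul, hv1]
    simp [hadef, hmdef]
  clear_value B s K n α u a m
  by_cases hcase : s ≤ Real.sqrt 2 * K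
  · -- trivial case
    refine ⟨((n⁻¹ : ℝ) : ℂ), ?_, ?_⟩
    · rw [vecNorm_toE]
      have h2 : toE (((n⁻¹ : ℝ) : ℂ) • v') = ((n⁻¹ : ℝ) : ℂ) • toE v' := rfl
      rw [h2, norm_smul, Complex.norm_real, Real.norm_eq_abs, abs_of_nonneg (by positivity),
        ← hndef]
      field_simp
    · rw [vecNorm_toE]
      have h2 : toE (((n⁻¹ : ℝ) : ℂ) • v' - v) = ((n⁻¹ : ℝ) : ℂ) • toE v' - toE v := rfl
      rw [h2]
      have h3 : ‖((n⁻¹ : ℝ) : ℂ) • toE v' - toE v‖ ≤ 2 := by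
        calc ‖((n⁻¹ : ℝ) : ℂ) • toE v' - toE v‖ ≤ ‖((n⁻¹ : ℝ) : ℂ) • toE v'‖ + ‖toE v‖ :=
              norm_sub_le _ _
          _ = 2 := by
              rw [norm_smul, Complex.norm_real, Real.norm_eq_abs, abs_of_nonneg (by positivity),
                hv1, ← hndef]
              field_simp
              linarith
      refine h3.trans ?_
      rw [le_div_iff₀ hs]
      nlinarith [Real.sqrt_nonneg 2]
  · push_neg at hcase
    have hsqrt2 : (0:ℝ) < Real.sqrt 2 := by positivity
    -- a > 0
    have hmK : s * m ≤ K * n := hkey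
    have ha : 0 < a := by
      rcases lt_or_eq_of_le ha0 with h | h
      · exact h
      · exfalso
        have hm : m ^ 2 = n ^ 2 := by rw [hpyth, ← h]; ring
        have hmn : m = n := by rw [← Real.sqrt_sq hm0, hm, Real.sqrt_sq hn.le]
        have hsK : s ≤ K := by
          have h' := hmK
          rw [hmn] at h'
          exact le_of_mul_le_mul_right h' hn
        have h12 : (1:ℝ) < Real.sqrt 2 := by
          rw [show (1:ℝ) = Real.sqrt 1 by simp]
          exact Real.sqrt_lt_sqrt (by norm_num) (by norm_num)
        have hge : 0 ≤ K * (Real.sqrt 2 - 1) := mul_nonneg hK0 (by linarith)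
        nlinarith [hge]
    have hex : ∃ c : ℂ, ‖c‖ = n⁻¹ ∧ c * α = ((a / n : ℝ) : ℂ) := by
      refine ⟨(starRingEnd ℂ) α * (((a * n)⁻¹ : ℝ) : ℂ), ?_, ?_⟩
      · rw [norm_mul, RCLike.norm_conj, Complex.norm_real, Real.norm_eq_abs,
          abs_of_nonneg (by positivity : (0:ℝ) ≤ (a * n)⁻¹), ← hadef,
          mul_inv]
        rw [← mul_assoc, mul_inv_cancel₀ (ne_of_gt ha), one_mul]
      · have h1 : (starRingEnd ℂ) α * α = ((a ^ 2 : ℝ) : ℂ) := by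
          rw [mul_comm, Complex.mul_conj, Complex.normSq_eq_norm_sq, ← hadef]
        rw [mul_assoc, mul_comm (((a * n)⁻¹ : ℝ) : ℂ), ← mul_assoc, h1, ← Complex.ofReal_mul]
        congr 1
        field_simp
    obtain ⟨c, hcnorm, hcα⟩ := hex
    refine ⟨c, ?_, ?_⟩
    · rw [vecNorm_toE]
      have h2 : toE (c • v') = c • toE v' := rfl
      rw [h2, norm_smul, hcnorm, ← hndef]
      field_simp
    · rw [vecNorm_toE]
      have h2 : toE (c • v' - v) = c • toE v' - toE v := rfl
      rw [h2]
      have hw : c • toE v' - toE v = ((a / n - 1 : ℝ) : ℂ) • toE v + c • u := by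
        rw [hdecomp, smul_add, smul_smul, hcα]
        have : ((a / n - 1 : ℝ) : ℂ) = ((a / n : ℝ) : ℂ) - 1 := by push_cast; ring
        rw [this, sub_smul, one_smul]
        abel
      rw [hw]
      have hcross : (inner ℂ (((a / n - 1 : ℝ) : ℂ) • toE v) (c • u) : ℂ) = 0 := by
        rw [inner_smul_left, inner_smul_right, hvu]
        ring
      have hnormsq : ‖((a / n - 1 : ℝ) : ℂ) • toE v + c • u‖ ^ 2
          = (a / n - 1) ^ 2 + (m / n) ^ 2 := by
        rw [norm_add_sq (𝕜 := ℂ), hcross]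
        rw [norm_smul, hv1, norm_smul, hcnorm, Complex.norm_real, Real.norm_eq_abs, ← hmdef]
        simp only [map_zero, mul_zero, mul_one, add_zero, mul_pow, sq_abs]
        ring
      have hT0 : 0 ≤ 2 * Real.sqrt 2 * K / s := by positivity
      refine le_of_sq (norm_nonneg _) hT0 ?_
      rw [hnormsq]
      have hT2 : (2 * Real.sqrt 2 * K / s) ^ 2 = 8 * K ^ 2 / s ^ 2 := by
        rw [div_pow, mul_pow, mul_pow, Real.sq_sqrt (by norm_num : (0:ℝ) ≤ 2)]
        ring
      rw [hT2]
      have han : a ≤ n := by nlinarith [hpyth, hm0, sq_nonneg m]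
      have hr1 : a / n ≤ 1 := by rw [div_le_one hn]; exact han
      have hr0 : 0 ≤ a / n := div_nonneg ha0 hn.le
      have hsum1 : (a / n) ^ 2 + (m / n) ^ 2 = 1 := by
        field_simp
        linarith [hpyth]
      have key2 : (a / n - 1) ^ 2 + (m / n) ^ 2 ≤ 2 * (m / n) ^ 2 := by
        nlinarith [mul_nonneg (sub_nonneg.2 hr1) hr0]
      have key3 : (m / n) ^ 2 ≤ K ^ 2 / s ^ 2 := by
        rw [div_pow, div_le_div_iff₀ (by positivity) (by positivity)]
        nlinarith [mul_le_mul hmK hmK (by positivity) (by positivity)]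
      have hKs : 0 ≤ K ^ 2 / s ^ 2 := by positivity
      have h8 : 8 * K ^ 2 / s ^ 2 = 2 * (K ^ 2 / s ^ 2) + 6 * (K ^ 2 / s ^ 2) := by ring
      linarith

end Stmt17
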